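/- For a probability distribution P on a finite set X and α > 1, the ε-smooth min-entropy satisfies H_min^ε(X) ≥ H_α(X) − (1/(α−1))·log(1/ε), where H_α(X) = (1/(1−α))·log(Σ_x P(x)^α), H_min of a subnormalized distribution Q is −log max_x Q(x), and H_min^ε(X) is the maximum of H_min(Q) over subnormalized distributions Q with Q ≤ P pointwise and Σ_x (P(x) − Q(x)) ≤ ε. -/

import Mathlib

/-- Classical smooth min-entropy bound via Rényi entropies:
`H_min^ε(X) ≥ H_α(X) − (1/(α−1))·log(1/ε)` for `α > 1`. -/
theorem classical_smooth_min_entropy_bound {X : Type*} [Fintype X]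
    (P : X → NNReal) (hP : ∑ x, P x = 1)
    (ε : ℝ) (hε : ε ∈ Set.Ioo (0 : ℝ) 1) (α : ℝ) (hα : 1 < α) :
    ∃ Q : X → NNReal,
      (∑ x, Q x ≤ 1) ∧ (∀ x, Q x ≤ P x) ∧ (∑ x, ((P x : ℝ) - (Q x : ℝ)) ≤ ε) ∧
      (- Real.logb 2 ((Finset.univ.sup Q : NNReal) : ℝ) ≥
        (1 / (1 - α)) * Real.logb 2 (∑ x, (P x : ℝ) ^ α)
          - (1 / (α - 1)) * Real.logb 2 (1 / ε)) := by
  obtain ⟨hε0, hε1⟩ := hε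
  have hα1 : (0:ℝ) < α - 1 := by linarith
  set K : ℝ := ∑ x, (P x : ℝ) ^ α with hKdef
  have hKpos : 0 < K := by
    obtain ⟨x0, hx0⟩ : ∃ x, P x ≠ 0 := by
      by_contra h
      push_neg at h
      simp [h] at hP
    have hx0' : (0:ℝ) < P x0 := by positivity
    have : (0:ℝ) < (P x0 : ℝ) ^ α := Real.rpow_pos_of_pos hx0' α
    calc (0:ℝ) < (P x0 : ℝ) ^ α := this
      _ ≤ K := Finset.single_le_sum (f := fun x => (P x : ℝ) ^ α)
          (fun x _ => by positivity) (Finset.mem_univ x0)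
  have hKε : 0 < K / ε := div_pos hKpos hε0
  set lam : ℝ := (K / ε) ^ (1 / (α - 1)) with hlamdef
  have hlampos : 0 < lam := Real.rpow_pos_of_pos hKε _
  have hlampow : lam ^ (α - 1) = K / ε := by
    rw [hlamdef, ← Real.rpow_mul hKε.le, one_div_mul_cancel hα1.ne', Real.rpow_one]
  set Q : X → NNReal := fun x => if (P x : ℝ) ≤ lam then P x else 0 with hQdef
  have hQle : ∀ x, Q x ≤ P x := by
    intro x; simp only [hQdef]; split <;> simp
  have hsum : ∑ x, Q x ≤ 1 := hP ▸ Finset.sum_le_sum fun x _ => hQle x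
  have htail : ∑ x, ((P x : ℝ) - (Q x : ℝ)) ≤ ε := by
    have hterm : ∀ x, (P x : ℝ) - (Q x : ℝ) ≤ (P x : ℝ) ^ α / lam ^ (α - 1) := by
      intro x
      simp only [hQdef]
      split
      · simp only [sub_self]; positivity
      · rename_i h
        push_neg at h
        have hp : 0 < (P x : ℝ) := lt_trans hlampos h
        have h1 : (1:ℝ) ≤ ((P x : ℝ) / lam) ^ (α - 1) :=
          Real.one_le_rpow ((one_le_div hlampos).mpr h.le) hα1.le
        have : (P x : ℝ) * 1 ≤ (P x : ℝ) * (((P x : ℝ) / lam) ^ (α - 1)) :=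
          mul_le_mul_of_nonneg_left h1 hp.le
        rw [Real.div_rpow hp.le hlampos.le] at this
        have heq : (P x : ℝ) * ((P x : ℝ) ^ (α - 1) / lam ^ (α - 1))
            = (P x : ℝ) ^ α / lam ^ (α - 1) := by
          rw [mul_div_assoc']
          congr 1
          rw [← Real.rpow_one_add' hp.le (by linarith : 1 + (α - 1) ≠ 0)]
          ring_nf
        rw [heq] at this
        simpa using this
    calc ∑ x, ((P x : ℝ) - (Q x : ℝ)) ≤ ∑ x, (P x : ℝ) ^ α / lam ^ (α - 1) :=
          Finset.sum_le_sum fun x _ => hterm x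
      _ = K / lam ^ (α - 1) := by rw [← Finset.sum_div]
      _ = ε := by rw [hlampow]; field_simp
  refine ⟨Q, hsum, hQle, htail, ?_⟩
  set S : NNReal := Finset.univ.sup Q with hSdef
  have hSlam : (S : ℝ) ≤ lam := by
    have : S ≤ Real.toNNReal lam := by
      apply Finset.sup_le
      intro x _
      simp only [hQdef]
      split
      · rename_i h
        exact NNReal.coe_le_coe.mp (by rwa [Real.coe_toNNReal _ hlampos.le])
      · simp
    calc (S : ℝ) ≤ (Real.toNNReal lam : ℝ) := NNReal.coe_le_coe.mpr this
      _ = lam := Real.coe_toNNReal _ hlampos.le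
  have hSpos : 0 < (S : ℝ) := by
    rcases eq_or_lt_of_le (zero_le : (0:NNReal) ≤ S) with h | h
    · exfalso
      have hQ0 : ∀ x, Q x = 0 := by
        intro x
        have := Finset.le_sup (f := Q) (Finset.mem_univ x)
        rw [← hSdef, ← h] at this
        exact le_antisymm this zero_le
      have : ∑ x, ((P x : ℝ) - (Q x : ℝ)) = 1 := by
        simp only [hQ0, NNReal.coe_zero, sub_zero]
        exact_mod_cast congrArg NNReal.toReal hP
      linarith [htail, this]
    · exact_mod_cast h
  have hlog2 : (0:ℝ) < Real.log 2 := Real.log_pos (by norm_num)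
  have hlog : Real.logb 2 (S : ℝ) ≤ Real.logb 2 lam :=
    Real.logb_le_logb_of_le (b := 2) (by norm_num) hSpos hSlam
  have hlam_log : Real.log lam = 1/(α-1) * (Real.log K - Real.log ε) := by
    rw [hlamdef, Real.log_rpow hKε, Real.log_div hKpos.ne' hε0.ne']
  have hRHS : (1/(1-α)) * Real.logb 2 K - (1/(α-1)) * Real.logb 2 (1/ε) = - Real.logb 2 lam := by
    simp only [Real.logb, hlam_log, Real.log_div one_ne_zero hε0.ne', Real.log_one]
    have h1 : (1:ℝ) - α ≠ 0 := by linarith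
    field_simp
    ring
  rw [ge_iff_le, hRHS]
  linarith
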